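/- Let p, q be reals with p ≠ q, min(p,q) ≤ 0 ≤ max(p,q) < 1. Then c := ((1−q)/(1−p))^{1/(p−q)} is the unique solution of ∫₀¹ f(1/(cx)) dx = 0 where f(x) = (x^p − x^q)/(p−q); i.e., c^{−p}/(1−p) = c^{−q}/(1−q). -/

import Mathlib

open MeasureTheory

lemma aux_int16 (r : ℝ) (hr : r < 1) (c' : ℝ) (hc' : 0 < c') :
    (∫ x in Set.Ioc (0:ℝ) 1, (1 / (c' * x)) ^ r) = c' ^ (-r) / (1 - r) := by
  have hrr : (-1:ℝ) < -r := by linarith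
  have hcongr : ∀ x ∈ Set.Ioc (0:ℝ) 1,
      (1 / (c' * x)) ^ r = c' ^ (-r) * x ^ (-r) := by
    intro x hx
    have hx0 : 0 < x := hx.1
    have hcx : 0 < c' * x := mul_pos hc' hx0
    rw [one_div, Real.inv_rpow hcx.le, ← Real.rpow_neg hcx.le,
      Real.mul_rpow hc'.le hx0.le]
  rw [setIntegral_congr_fun measurableSet_Ioc hcongr, MeasureTheory.integral_const_mul]
  have : (∫ x in Set.Ioc (0:ℝ) 1, x ^ (-r)) = 1 / (1 - r) := by
    rw [← intervalIntegral.integral_of_le (by norm_num : (0:ℝ) ≤ 1),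
      integral_rpow (Or.inl hrr), Real.one_rpow, Real.zero_rpow (by linarith)]
    ring_nf
  rw [this]
  ring

lemma aux_ion16 (r : ℝ) (hr : r < 1) (c' : ℝ) (hc' : 0 < c') :
    IntegrableOn (fun x : ℝ => (1 / (c' * x)) ^ r) (Set.Ioc (0:ℝ) 1) := by
  have hrr : (-1:ℝ) < -r := by linarith
  have hInt : IntegrableOn (fun x : ℝ => x ^ (-r)) (Set.Ioc (0:ℝ) 1) := by
    have := (intervalIntegral.intervalIntegrable_rpow' (a := 0) (b := 1) hrr)
    rwa [intervalIntegrable_iff_integrableOn_Ioc_of_le (by norm_num)] at this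
  refine MeasureTheory.IntegrableOn.congr_fun (hInt.const_mul (c' ^ (-r))) ?_
    measurableSet_Ioc
  intro x hx
  have hx0 : 0 < x := hx.1
  have hcx : 0 < c' * x := mul_pos hc' hx0
  have h : (1 / (c' * x)) ^ r = c' ^ (-r) * x ^ (-r) := by
    rw [one_div, Real.inv_rpow hcx.le, ← Real.rpow_neg hcx.le,
      Real.mul_rpow hc'.le hx0.le]
  exact h.symm

/-- For `p ≠ q` with `min(p,q) ≤ 0 ≤ max(p,q) < 1`,
`c := ((1-q)/(1-p))^{1/(p-q)}` is the unique positive solution of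
`∫₀¹ f(1/(cx)) dx = 0` with `f(x) = (x^p - x^q)/(p-q)`, i.e.
`c^{-p}/(1-p) = c^{-q}/(1-q)`. -/
theorem stmt_16 (p q : ℝ) (hpq : p ≠ q)
    (hmin : min p q ≤ 0) (hmax0 : 0 ≤ max p q) (hmax1 : max p q < 1)
    (f : ℝ → ℝ) (hf : ∀ x : ℝ, f x = (Real.rpow x p - Real.rpow x q) / (p - q))
    (c : ℝ) (hc : c = Real.rpow ((1 - q) / (1 - p)) (1 / (p - q))) :
    (∫ x in Set.Ioc (0:ℝ) 1, f (1 / (c * x))) = 0 ∧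
    (∀ c' : ℝ, 0 < c' → (∫ x in Set.Ioc (0:ℝ) 1, f (1 / (c' * x))) = 0 → c' = c) ∧
    Real.rpow c (-p) / (1 - p) = Real.rpow c (-q) / (1 - q) := by
  have hrw : ∀ a b : ℝ, Real.rpow a b = a ^ b := fun _ _ => rfl
  simp only [hrw] at hf hc ⊢
  have hp1 : p < 1 := lt_of_le_of_lt (le_max_left p q) hmax1
  have hq1 : q < 1 := lt_of_le_of_lt (le_max_right p q) hmax1
  have h1p : (0:ℝ) < 1 - p := by linarith
  have h1q : (0:ℝ) < 1 - q := by linarith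
  have hpq0 : p - q ≠ 0 := sub_ne_zero.mpr hpq
  have hqp0 : q - p ≠ 0 := sub_ne_zero.mpr (Ne.symm hpq)
  have hbase : (0:ℝ) < (1 - q) / (1 - p) := div_pos h1q h1p
  have hcpos : 0 < c := hc ▸ Real.rpow_pos_of_pos hbase _
  -- the main integral formula
  have hformula : ∀ c' : ℝ, 0 < c' →
      (∫ x in Set.Ioc (0:ℝ) 1, f (1 / (c' * x))) =
        (c' ^ (-p) / (1 - p) - c' ^ (-q) / (1 - q)) / (p - q) := by
    intro c' hc'
    simp only [hf]
    rw [integral_div, integral_sub (aux_ion16 p hp1 c' hc') (aux_ion16 q hq1 c' hc'),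
      aux_int16 p hp1 c' hc', aux_int16 q hq1 c' hc']
  -- c satisfies the algebraic identity
  have hkey : c ^ (q - p) = (1 - p) / (1 - q) := by
    rw [hc, ← Real.rpow_mul hbase.le,
      show 1 / (p - q) * (q - p) = -1 by rw [div_mul_eq_mul_div, one_mul, div_eq_iff hpq0]; ring,
      Real.rpow_neg_one, inv_div]
  have halg : c ^ (-p) / (1 - p) = c ^ (-q) / (1 - q) := by
    have h1 : c ^ (-p) = c ^ (-q) * c ^ (q - p) := by
      rw [← Real.rpow_add hcpos, show -q + (q - p) = -p by ring]
    rw [h1, hkey]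
    field_simp
  refine ⟨?_, ?_, halg⟩
  · rw [hformula c hcpos, halg, sub_self, zero_div]
  · intro c' hc' hzero
    rw [hformula c' hc'] at hzero
    have h0 : c' ^ (-p) / (1 - p) = c' ^ (-q) / (1 - q) := by
      rcases div_eq_zero_iff.mp hzero with h | h
      · linarith [sub_eq_zero.mp h]
      · exact absurd h hpq0
    have h3 : c' ^ (-q) ≠ 0 := ne_of_gt (Real.rpow_pos_of_pos hc' _)
    have h2 : c' ^ (-p) = c' ^ (-q) * c' ^ (q - p) := by
      rw [← Real.rpow_add hc', show -q + (q - p) = -p by ring]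
    have h4 : c' ^ (-p) * (1 - q) = c' ^ (-q) * (1 - p) :=
      (div_eq_div_iff (ne_of_gt h1p) (ne_of_gt h1q)).mp h0
    rw [h2] at h4
    have h5 : c' ^ (-q) * (c' ^ (q - p) * (1 - q)) = c' ^ (-q) * (1 - p) := by
      rw [← h4]; ring
    have hkey' : c' ^ (q - p) = (1 - p) / (1 - q) := by
      have := mul_left_cancel₀ h3 h5
      field_simp
      linarith [this]
    have e1 : (c' ^ (q - p)) ^ (1 / (q - p)) = c' := by
      rw [← Real.rpow_mul hc'.le, mul_one_div_cancel hqp0, Real.rpow_one]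
    have : c' = ((1 - p) / (1 - q)) ^ (1 / (q - p)) := by rw [← e1, hkey']
    rw [this, hc, show (1 - p) / (1 - q) = ((1 - q) / (1 - p))⁻¹ by rw [inv_div],
      ← Real.rpow_neg_one ((1 - q) / (1 - p)), ← Real.rpow_mul hbase.le]
    congr 1
    field_simp
    ring
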